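/- Let σ̄ ∈ S₀ ∩ int(dom V*) be a critical point of D, i.e., ∇D(σ̄) = 0, and set x̄ := A(σ̄)⁻¹b(σ̄). Then (x̄,σ̄) is a critical point of Ξ; consequently x̄ ∈ X₀, x̄ is a critical point of f, f(x̄) = Ξ(x̄,σ̄) = D(σ̄), and if in addition A(σ̄) is positive semidefinite then f(x̄) = inf_{x ∈ dom f} f(x) = sup_{σ ∈ S_col⁺} D(σ) = D(σ̄). -/

import Mathlib

open Matrix Set

noncomputable section

/-- The quadratic function `x ↦ ½⟨x, A x⟩ − ⟨b, x⟩ + c`. -/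
def qf {n : ℕ} (A : Matrix (Fin n) (Fin n) ℝ) (b : Fin n → ℝ) (c : ℝ) (x : Fin n → ℝ) : ℝ :=
  (1 / 2 : ℝ) * (x ⬝ᵥ A.mulVec x) - b ⬝ᵥ x + c

/-- `A(σ) = A₀ + Σ σ_k A_k`. -/
def Amat {n m : ℕ} (A0 : Matrix (Fin n) (Fin n) ℝ) (A : Fin m → Matrix (Fin n) (Fin n) ℝ)
    (σ : Fin m → ℝ) : Matrix (Fin n) (Fin n) ℝ :=
  A0 + ∑ k, σ k • A k

/-- `b(σ) = b₀ + Σ σ_k b_k`. -/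
def bvec {n m : ℕ} (b0 : Fin n → ℝ) (b : Fin m → Fin n → ℝ) (σ : Fin m → ℝ) : Fin n → ℝ :=
  b0 + ∑ k, σ k • b k

/-- `q(x) = (q₁(x), …, q_m(x))`. -/
def qvec {n m : ℕ} (A : Fin m → Matrix (Fin n) (Fin n) ℝ) (b : Fin m → Fin n → ℝ)
    (c : Fin m → ℝ) (x : Fin n → ℝ) : Fin m → ℝ :=
  fun i => qf (A i) (b i) (c i) x

/-- Subdifferential of an (extended-real-valued) convex function represented by its
finite part `V` and its effective domain `dV`; it is empty outside `dV`. -/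
def subdiff {m : ℕ} (V : (Fin m → ℝ) → ℝ) (dV : Set (Fin m → ℝ)) (y : Fin m → ℝ) :
    Set (Fin m → ℝ) :=
  {σ | y ∈ dV ∧ ∀ y' ∈ dV, (y' - y) ⬝ᵥ σ ≤ V y' - V y}

/-- `V ∈ Γ(ℝᵐ)`: proper, convex and lower semicontinuous (closed epigraph), where the
extended-real-valued function is represented by its finite part `V` on its domain `dV`. -/
def properLscConvex {m : ℕ} (V : (Fin m → ℝ) → ℝ) (dV : Set (Fin m → ℝ)) : Prop :=
  dV.Nonempty ∧ ConvexOn ℝ dV V ∧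
    IsClosed {p : (Fin m → ℝ) × ℝ | p.1 ∈ dV ∧ V p.1 ≤ p.2}

/-- `(Vs, dVs)` is the Fenchel conjugate of `(V, dV)`:
`dVs` is the set where the supremum is finite and `Vs` its value there. -/
def isConjugate {m : ℕ} (V : (Fin m → ℝ) → ℝ) (dV : Set (Fin m → ℝ))
    (Vs : (Fin m → ℝ) → ℝ) (dVs : Set (Fin m → ℝ)) : Prop :=
  dVs = {σ | BddAbove ((fun y => y ⬝ᵥ σ - V y) '' dV)} ∧
    ∀ σ ∈ dVs, Vs σ = sSup ((fun y => y ⬝ᵥ σ - V y) '' dV)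

/-- The continuous linear functional `v ↦ ⟨g, v⟩`. -/
def dotCLM {k : ℕ} (g : Fin k → ℝ) : (Fin k → ℝ) →L[ℝ] ℝ :=
  LinearMap.toContinuousLinearMap
    { toFun := fun v => g ⬝ᵥ v
      map_add' := fun u v => by simp [dotProduct_add]
      map_smul' := fun t v => by simp [dotProduct_smul, smul_eq_mul] }

/-- The continuous linear map `v ↦ M v`. -/
def matCLM {k l : ℕ} (M : Matrix (Fin l) (Fin k) ℝ) : (Fin k → ℝ) →L[ℝ] (Fin l → ℝ) :=
  LinearMap.toContinuousLinearMap M.mulVecLin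

/-- `V ∈ Γ_sc(ℝᵐ)`: a proper lsc convex function of Legendre type, i.e. essentially smooth
(differentiable on the nonempty interior of its domain, with gradient `gV`, and with empty
subdifferential outside this interior) and essentially strictly convex. -/
def LegendreType {m : ℕ} (V : (Fin m → ℝ) → ℝ) (dV : Set (Fin m → ℝ))
    (gV : (Fin m → ℝ) → (Fin m → ℝ)) : Prop :=
  (interior dV).Nonempty ∧
  (∀ y ∈ interior dV, HasFDerivAt V (dotCLM (gV y)) y) ∧
  (∀ y, y ∉ interior dV → subdiff V dV y = ∅) ∧
  StrictConvexOn ℝ (interior dV) V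

section Aux

@[simp] lemma dotCLM_apply {k : ℕ} (g v : Fin k → ℝ) : dotCLM g v = g ⬝ᵥ v := rfl

variable {E : Type*} [NormedAddCommGroup E] [NormedSpace ℝ E]

lemma hasFDerivAt_dot {k : ℕ} {f g : E → Fin k → ℝ} {F G : E →L[ℝ] (Fin k → ℝ)} {x : E}
    (hf : HasFDerivAt f F x) (hg : HasFDerivAt g G x) :
    HasFDerivAt (fun e => f e ⬝ᵥ g e) ((dotCLM (g x)).comp F + (dotCLM (f x)).comp G) x := by
  have hfi : ∀ i, HasFDerivAt (fun e => f e i)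
      ((ContinuousLinearMap.proj (R := ℝ) (φ := fun _ : Fin k => ℝ) i).comp F) x :=
    fun i => hasFDerivAt_pi'.1 hf i
  have hgi : ∀ i, HasFDerivAt (fun e => g e i)
      ((ContinuousLinearMap.proj (R := ℝ) (φ := fun _ : Fin k => ℝ) i).comp G) x :=
    fun i => hasFDerivAt_pi'.1 hg i
  have hsum := HasFDerivAt.fun_sum (u := Finset.univ)
    (fun i (_ : i ∈ Finset.univ) => (hfi i).mul (hgi i))
  have : (fun e => f e ⬝ᵥ g e) = fun e => ∑ i, f e i * g e i := by
    funext e; simp [dotProduct]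
  rw [this]
  refine hsum.congr_fderiv ?_
  ext v
  simp [dotProduct, ContinuousLinearMap.sum_apply, Finset.sum_add_distrib,
    Finset.mul_sum, mul_comm]
  ring

@[simp] lemma matCLM_apply {k l : ℕ} (M : Matrix (Fin l) (Fin k) ℝ) (v : Fin k → ℝ) :
    matCLM M v = M *ᵥ v := rfl

lemma dot_symm {n : ℕ} {M : Matrix (Fin n) (Fin n) ℝ} (hM : M.IsSymm) (x y : Fin n → ℝ) :
    x ⬝ᵥ M *ᵥ y = y ⬝ᵥ M *ᵥ x := by
  rw [Matrix.dotProduct_mulVec x M y, ← Matrix.mulVec_transpose, hM.eq, dotProduct_comm]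

lemma hasFDerivAt_mulVec {n : ℕ} (M : Matrix (Fin n) (Fin n) ℝ) (x₀ : Fin n → ℝ) :
    HasFDerivAt (fun v => M *ᵥ v) (matCLM M) x₀ := by
  have heq : (fun v : Fin n → ℝ => M *ᵥ v) = ⇑(matCLM M) := by funext v; simp
  rw [heq]; exact (matCLM M).hasFDerivAt

lemma hasFDerivAt_qf {n : ℕ} {M : Matrix (Fin n) (Fin n) ℝ} (hM : M.IsSymm)
    (bb : Fin n → ℝ) (c : ℝ) (x₀ : Fin n → ℝ) :
    HasFDerivAt (qf M bb c) (dotCLM (M *ᵥ x₀ - bb)) x₀ := by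
  have h1 := hasFDerivAt_dot (hasFDerivAt_id x₀) (hasFDerivAt_mulVec M x₀)
  have h2 : HasFDerivAt (fun x : Fin n → ℝ => bb ⬝ᵥ x) (dotCLM bb) x₀ :=
    (dotCLM bb).hasFDerivAt
  have h3 := ((h1.const_mul (1/2 : ℝ)).sub h2).add_const c
  refine h3.congr_fderiv ?_
  ext v
  have hsy : x₀ ⬝ᵥ M *ᵥ v = (M *ᵥ x₀) ⬝ᵥ v := by
    rw [dot_symm hM x₀ v, dotProduct_comm]
  simp [sub_dotProduct, hsy]
  ring

lemma hasFDerivAt_qvec {n m : ℕ} (A : Fin m → Matrix (Fin n) (Fin n) ℝ)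
    (hA : ∀ i, (A i).IsSymm) (b : Fin m → Fin n → ℝ) (c : Fin m → ℝ) (x₀ : Fin n → ℝ) :
    HasFDerivAt (qvec A b c) (ContinuousLinearMap.pi (fun k => dotCLM (A k *ᵥ x₀ - b k))) x₀ :=
  hasFDerivAt_pi.2 fun k => hasFDerivAt_qf (hA k) (b k) (c k) x₀

lemma crit_dot {n m : ℕ} (A0 : Matrix (Fin n) (Fin n) ℝ) (A : Fin m → Matrix (Fin n) (Fin n) ℝ)
    (b0 : Fin n → ℝ) (b : Fin m → Fin n → ℝ) (σ : Fin m → ℝ) (x v : Fin n → ℝ) :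
    (A0 *ᵥ x - b0) ⬝ᵥ v + σ ⬝ᵥ (fun k => (A k *ᵥ x - b k) ⬝ᵥ v) =
      (Amat A0 A σ *ᵥ x - bvec b0 b σ) ⬝ᵥ v := by
  have h1 : ∀ i, (Amat A0 A σ *ᵥ x) i = (A0 *ᵥ x) i + ∑ k, σ k * (A k *ᵥ x) i := by
    intro i
    simp only [Amat, Matrix.add_mulVec, Pi.add_apply]
    congr 1
    simp only [Matrix.mulVec, dotProduct, Finset.sum_apply, Matrix.sum_apply,
      Matrix.smul_apply, smul_eq_mul, Finset.sum_mul, Finset.mul_sum]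
    rw [Finset.sum_comm]
    exact Finset.sum_congr rfl fun k _ => Finset.sum_congr rfl fun j _ => by ring
  simp only [dotProduct, Pi.sub_apply, Pi.add_apply, bvec, Finset.sum_apply,
    Pi.smul_apply, smul_eq_mul]
  have hL : ∀ k : Fin m, σ k * ∑ i, ((A k *ᵥ x) i - b k i) * v i
      = ∑ i, σ k * (((A k *ᵥ x) i - b k i) * v i) := fun k => Finset.mul_sum _ _ _
  simp only [hL]
  rw [Finset.sum_comm]
  rw [← Finset.sum_add_distrib]
  refine Finset.sum_congr rfl fun i _ => ?_
  rw [h1 i]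
  have hs : ∑ k, σ k * (((A k *ᵥ x) i - b k i) * v i)
      = (∑ k, σ k * (A k *ᵥ x) i) * v i - (∑ k, σ k * b k i) * v i := by
    rw [Finset.sum_mul, Finset.sum_mul, ← Finset.sum_sub_distrib]
    exact Finset.sum_congr rfl fun k _ => by ring
  rw [hs]; ring

lemma hasFDerivAt_F {n m : ℕ} {A0 : Matrix (Fin n) (Fin n) ℝ}
    {A : Fin m → Matrix (Fin n) (Fin n) ℝ} {b0 : Fin n → ℝ} {b : Fin m → Fin n → ℝ}
    {c : Fin m → ℝ} (hA0 : A0.IsSymm) (hA : ∀ i, (A i).IsSymm) {xb : Fin n → ℝ}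
    {σb : Fin m → ℝ} (h0 : Amat A0 A σb *ᵥ xb = bvec b0 b σb) :
    HasFDerivAt (fun p : (Fin n → ℝ) × (Fin m → ℝ) => qf A0 b0 0 p.1 + qvec A b c p.1 ⬝ᵥ p.2)
      ((dotCLM (qvec A b c xb)).comp (ContinuousLinearMap.snd ℝ (Fin n → ℝ) (Fin m → ℝ)))
      (xb, σb) := by
  have hq1 := (hasFDerivAt_qf hA0 b0 0 xb).comp (xb, σb)
    (hasFDerivAt_fst (𝕜 := ℝ) (p := (xb, σb)))
  have hq2 := (hasFDerivAt_qvec A hA b c xb).comp (xb, σb)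
    (hasFDerivAt_fst (𝕜 := ℝ) (p := (xb, σb)))
  have hdot := hasFDerivAt_dot hq2 (hasFDerivAt_snd (p := (xb, σb)))
  have h := hq1.add hdot
  refine h.congr_fderiv ?_
  refine ContinuousLinearMap.ext fun p => ?_
  simp only [ContinuousLinearMap.comp_apply, ContinuousLinearMap.add_apply,
    ContinuousLinearMap.coe_fst', ContinuousLinearMap.coe_snd', dotCLM_apply]
  have hpi : (ContinuousLinearMap.pi (fun k => dotCLM (A k *ᵥ xb - b k))) p.1
      = fun k => (A k *ᵥ xb - b k) ⬝ᵥ p.1 := by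
    funext k; simp [ContinuousLinearMap.pi_apply]
  rw [hpi, ← add_assoc, crit_dot, h0, sub_self, zero_dotProduct, zero_add]; rfl

lemma hasFDerivAt_primal_crit {n m : ℕ} {A0 : Matrix (Fin n) (Fin n) ℝ}
    {A : Fin m → Matrix (Fin n) (Fin n) ℝ} {b0 : Fin n → ℝ} {b : Fin m → Fin n → ℝ}
    {c : Fin m → ℝ} (hA0 : A0.IsSymm) (hA : ∀ i, (A i).IsSymm) {xb : Fin n → ℝ}
    {σb : Fin m → ℝ} (h0 : Amat A0 A σb *ᵥ xb = bvec b0 b σb)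
    {V : (Fin m → ℝ) → ℝ} (hV : HasFDerivAt V (dotCLM σb) (qvec A b c xb)) :
    HasFDerivAt (fun x => qf A0 b0 0 x + V (qvec A b c x))
      (0 : (Fin n → ℝ) →L[ℝ] ℝ) xb := by
  have hq1 := hasFDerivAt_qf hA0 b0 0 xb
  have hcomp := hV.comp xb (hasFDerivAt_qvec A hA b c xb)
  have h := hq1.add hcomp
  refine h.congr_fderiv ?_
  refine ContinuousLinearMap.ext fun v => ?_
  simp only [ContinuousLinearMap.comp_apply, ContinuousLinearMap.add_apply,
    ContinuousLinearMap.zero_apply, dotCLM_apply]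
  have hpi : (ContinuousLinearMap.pi (fun k => dotCLM (A k *ᵥ xb - b k))) v
      = fun k => (A k *ᵥ xb - b k) ⬝ᵥ v := by
    funext k; simp [ContinuousLinearMap.pi_apply]
  rw [hpi, crit_dot, h0, sub_self, zero_dotProduct]

lemma differentiableAt_finset_prod {ι : Type*} {u : Finset ι} {f : ι → E → ℝ} {x : E}
    (h : ∀ i ∈ u, DifferentiableAt ℝ (f i) x) :
    DifferentiableAt ℝ (fun e => ∏ i ∈ u, f i e) x := by
  classical
  induction u using Finset.induction with
  | empty => simpa using differentiableAt_const (1 : ℝ)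
  | insert a s hni ih =>
    simp only [Finset.prod_insert hni]
    exact (h a (Finset.mem_insert_self a s)).mul
      (ih fun i hi => h i (Finset.mem_insert_of_mem hi))

lemma differentiableAt_det {n : ℕ} {M : E → Matrix (Fin n) (Fin n) ℝ} {x : E}
    (h : ∀ i j, DifferentiableAt ℝ (fun e => M e i j) x) :
    DifferentiableAt ℝ (fun e => (M e).det) x := by
  simp only [Matrix.det_apply']
  exact DifferentiableAt.fun_sum fun τ _ =>
    ((differentiableAt_finset_prod fun i _ => h (τ i) i).const_mul _)

lemma diff_Amat_entry {n m : ℕ} {A0 : Matrix (Fin n) (Fin n) ℝ}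
    {A : Fin m → Matrix (Fin n) (Fin n) ℝ} (i j : Fin n) (σb : Fin m → ℝ) :
    DifferentiableAt ℝ (fun σ => Amat A0 A σ i j) σb := by
  have heq : (fun σ : Fin m → ℝ => Amat A0 A σ i j)
      = fun σ => A0 i j + ∑ k, σ k * A k i j := by
    funext σ; simp [Amat, Matrix.sum_apply]
  rw [heq]
  exact (differentiableAt_const _).add (DifferentiableAt.fun_sum fun k _ =>
    ((ContinuousLinearMap.proj (R := ℝ) (φ := fun _ : Fin m => ℝ) k).differentiableAt).mul_const _)

lemma diff_bvec_entry {n m : ℕ} {b0 : Fin n → ℝ} {b : Fin m → Fin n → ℝ} (j : Fin n)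
    (σb : Fin m → ℝ) : DifferentiableAt ℝ (fun σ => bvec b0 b σ j) σb := by
  have heq : (fun σ : Fin m → ℝ => bvec b0 b σ j) = fun σ => b0 j + ∑ k, σ k * b k j := by
    funext σ; simp [bvec]
  rw [heq]
  exact (differentiableAt_const _).add (DifferentiableAt.fun_sum fun k _ =>
    ((ContinuousLinearMap.proj (R := ℝ) (φ := fun _ : Fin m => ℝ) k).differentiableAt).mul_const _)

lemma diff_xfun {n m : ℕ} {A0 : Matrix (Fin n) (Fin n) ℝ}
    {A : Fin m → Matrix (Fin n) (Fin n) ℝ} {b0 : Fin n → ℝ} {b : Fin m → Fin n → ℝ}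
    {σb : Fin m → ℝ} (hdet : (Amat A0 A σb).det ≠ 0) :
    DifferentiableAt ℝ (fun σ => (Amat A0 A σ)⁻¹ *ᵥ bvec b0 b σ) σb := by
  rw [differentiableAt_pi]
  intro i
  have heq : (fun σ : Fin m → ℝ => ((Amat A0 A σ)⁻¹ *ᵥ bvec b0 b σ) i)
      = fun σ => ((Amat A0 A σ).det)⁻¹ *
          ∑ j, (Amat A0 A σ).adjugate i j * bvec b0 b σ j := by
    funext σ
    rw [Matrix.inv_def, Matrix.smul_mulVec, Pi.smul_apply, Ring.inverse_eq_inv']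
    simp [Matrix.mulVec, dotProduct]
  rw [heq]
  have hdetd : DifferentiableAt ℝ (fun σ => (Amat A0 A σ).det) σb :=
    differentiableAt_det fun i j => diff_Amat_entry i j σb
  have hadj : ∀ i j : Fin n,
      DifferentiableAt ℝ (fun σ => (Amat A0 A σ).adjugate i j) σb := by
    intro i j
    have h2 : (fun σ : Fin m → ℝ => (Amat A0 A σ).adjugate i j)
        = fun σ => ((Amat A0 A σ).updateRow j (Pi.single i 1)).det := by
      funext σ; rw [Matrix.adjugate_apply]
    rw [h2]
    refine differentiableAt_det fun i' k => ?_
    by_cases h : i' = j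
    · simp only [Matrix.updateRow_apply, h, if_pos rfl]
      exact differentiableAt_const _
    · simp only [Matrix.updateRow_apply, if_neg h]
      exact diff_Amat_entry i' k σb
  exact (hdetd.inv hdet).mul
    (DifferentiableAt.fun_sum fun j _ => (hadj i j).mul (diff_bvec_entry j σb))

lemma mulVec_inv_eq {n : ℕ} {M : Matrix (Fin n) (Fin n) ℝ} (h : IsUnit M.det)
    (v : Fin n → ℝ) : M *ᵥ (M⁻¹ *ᵥ v) = v := by
  rw [Matrix.mulVec_mulVec, Matrix.mul_nonsing_inv _ h, Matrix.one_mulVec]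

lemma qvec_eq_gVs {n m : ℕ} {A0 : Matrix (Fin n) (Fin n) ℝ}
    {A : Fin m → Matrix (Fin n) (Fin n) ℝ} {b0 : Fin n → ℝ} {b : Fin m → Fin n → ℝ}
    {c : Fin m → ℝ} (hA0 : A0.IsSymm) (hA : ∀ i, (A i).IsSymm)
    {Vs : (Fin m → ℝ) → ℝ} {dVs : Set (Fin m → ℝ)} {gVs : (Fin m → ℝ) → (Fin m → ℝ)}
    (hgVs : ∀ σ ∈ interior dVs, HasFDerivAt Vs (dotCLM (gVs σ)) σ)
    {D : (Fin m → ℝ) → ℝ}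
    (hD : ∀ σ ∈ dVs, bvec b0 b σ ∈ Set.range (Amat A0 A σ).mulVec →
      ∀ x, Amat A0 A σ *ᵥ x = bvec b0 b σ →
        D σ = qf A0 b0 0 x + qvec A b c x ⬝ᵥ σ - Vs σ)
    {σb : Fin m → ℝ} (hσint : σb ∈ interior dVs)
    (hS0 : IsUnit (Amat A0 A σb).det)
    (hDcrit : HasFDerivAt D (0 : (Fin m → ℝ) →L[ℝ] ℝ) σb)
    {xb : Fin n → ℝ} (hxb : xb = (Amat A0 A σb)⁻¹ *ᵥ bvec b0 b σb) :
    qvec A b c xb = gVs σb := by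
  set xf : (Fin m → ℝ) → (Fin n → ℝ) := fun σ => (Amat A0 A σ)⁻¹ *ᵥ bvec b0 b σ with hxf
  have h0 : Amat A0 A σb *ᵥ xb = bvec b0 b σb := by rw [hxb]; exact mulVec_inv_eq hS0 _
  have hdetne : (Amat A0 A σb).det ≠ 0 := hS0.ne_zero
  -- continuity of the determinant
  have hAc : Continuous (fun σ : Fin m → ℝ => Amat A0 A σ) := by
    refine continuous_const.add (continuous_finset_sum _ fun k _ => ?_)
    exact (continuous_apply k).smul continuous_const
  have hdc : Continuous (fun σ : Fin m → ℝ => (Amat A0 A σ).det) := hAc.matrix_det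
  have hev : ∀ᶠ σ in nhds σb,
      D σ = qf A0 b0 0 (xf σ) + qvec A b c (xf σ) ⬝ᵥ σ - Vs σ := by
    have h1 : ∀ᶠ σ in nhds σb, (Amat A0 A σ).det ≠ 0 :=
      hdc.continuousAt.eventually_ne hdetne
    have h2 : ∀ᶠ σ in nhds σb, σ ∈ interior dVs :=
      isOpen_interior.eventually_mem hσint
    filter_upwards [h1, h2] with σ hσ1 hσ2
    have hu : IsUnit (Amat A0 A σ).det := isUnit_iff_ne_zero.2 hσ1
    have hxσ : Amat A0 A σ *ᵥ xf σ = bvec b0 b σ := mulVec_inv_eq hu _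
    exact hD σ (interior_subset hσ2) ⟨xf σ, hxσ⟩ (xf σ) hxσ
  have hVs' : HasFDerivAt Vs (dotCLM (gVs σb)) σb := hgVs σb hσint
  have hxd : DifferentiableAt ℝ xf σb := diff_xfun hdetne
  have hx : HasFDerivAt xf (fderiv ℝ xf σb) σb := hxd.hasFDerivAt
  have hpair : HasFDerivAt (fun σ => (xf σ, σ))
      ((fderiv ℝ xf σb).prod (ContinuousLinearMap.id ℝ _)) σb := hx.prodMk (hasFDerivAt_id σb)
  have hF := hasFDerivAt_F (c := c) hA0 hA h0
  have hxfσb : xf σb = xb := hxb.symm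
  have hF' : HasFDerivAt
      (fun p : (Fin n → ℝ) × (Fin m → ℝ) => qf A0 b0 0 p.1 + qvec A b c p.1 ⬝ᵥ p.2)
      ((dotCLM (qvec A b c xb)).comp (ContinuousLinearMap.snd ℝ (Fin n → ℝ) (Fin m → ℝ)))
      (xf σb, σb) := by rw [hxfσb]; exact hF
  have hΦ : HasFDerivAt (fun σ => qf A0 b0 0 (xf σ) + qvec A b c (xf σ) ⬝ᵥ σ)
      (((dotCLM (qvec A b c xb)).comp (ContinuousLinearMap.snd ℝ (Fin n → ℝ) (Fin m → ℝ))).comp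
        ((fderiv ℝ xf σb).prod (ContinuousLinearMap.id ℝ (Fin m → ℝ)))) σb :=
    HasFDerivAt.comp (f := fun σ => (xf σ, σ))
      (g := fun p : (Fin n → ℝ) × (Fin m → ℝ) => qf A0 b0 0 p.1 + qvec A b c p.1 ⬝ᵥ p.2)
      σb hF' hpair
  have hG := hΦ.sub hVs'
  have hDd : HasFDerivAt D
      (((dotCLM (qvec A b c xb)).comp (ContinuousLinearMap.snd ℝ (Fin n → ℝ) (Fin m → ℝ))).comp
        ((fderiv ℝ xf σb).prod (ContinuousLinearMap.id ℝ _)) - dotCLM (gVs σb)) σb :=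
    hG.congr_of_eventuallyEq hev
  have huniq := hDd.unique hDcrit
  funext k
  have := congrArg (fun L : (Fin m → ℝ) →L[ℝ] ℝ => L (Pi.single k 1)) huniq
  simp only [ContinuousLinearMap.sub_apply, ContinuousLinearMap.comp_apply,
    ContinuousLinearMap.prod_apply, ContinuousLinearMap.coe_snd',
    ContinuousLinearMap.id_apply, ContinuousLinearMap.zero_apply, dotCLM_apply] at this
  have h3 : ∀ w : Fin m → ℝ, w ⬝ᵥ Pi.single k 1 = w k := by
    intro w; simp [dotProduct_single]
  rw [h3, h3] at this
  linarith

lemma line_hasDerivAt {k : ℕ} {g : (Fin k → ℝ) → ℝ} {G : (Fin k → ℝ) →L[ℝ] ℝ}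
    {y : Fin k → ℝ} (u : Fin k → ℝ) (hg : HasFDerivAt g G y) :
    HasDerivAt (fun t : ℝ => g (y + t • u)) (G u) 0 := by
  have hc : HasDerivAt (fun t : ℝ => y + t • u) u 0 := by
    simpa using ((hasDerivAt_id (0 : ℝ)).smul_const u).const_add y
  have h0 : y = y + (0 : ℝ) • u := by simp
  rw [h0] at hg
  exact hg.comp_hasDerivAt 0 hc

lemma eventually_line_mem {k : ℕ} {s : Set (Fin k → ℝ)} (hs : IsOpen s) {y : Fin k → ℝ}
    (hy : y ∈ s) (u : Fin k → ℝ) : ∀ᶠ t : ℝ in nhdsWithin 0 (Set.Ioi 0), y + t • u ∈ s := by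
  have hc : Continuous fun t : ℝ => y + t • u := by continuity
  have h1 : ∀ᶠ t : ℝ in nhds 0, y + t • u ∈ s := by
    have := hc.continuousAt (x := 0)
    exact this.eventually_mem (hs.mem_nhds (by simpa using hy))
  exact nhdsWithin_le_nhds h1

lemma slope_upper {k : ℕ} {g : (Fin k → ℝ) → ℝ} {G : (Fin k → ℝ) →L[ℝ] ℝ}
    {y : Fin k → ℝ} (u : Fin k → ℝ) (hg : HasFDerivAt g G y) {ε : ℝ} (hε : 0 < ε)
    {s : Set (Fin k → ℝ)} (hs : IsOpen s) (hy : y ∈ s) :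
    ∃ t : ℝ, 0 < t ∧ y + t • u ∈ s ∧ g (y + t • u) - g y ≤ t * (G u + ε) := by
  have hd := line_hasDerivAt u hg
  have hslope := hasDerivAt_iff_tendsto_slope.1 hd
  have hev : ∀ᶠ t : ℝ in nhdsWithin 0 {(0:ℝ)}ᶜ,
      slope (fun t : ℝ => g (y + t • u)) 0 t < G u + ε :=
    hslope.eventually_lt_const (lt_add_of_pos_right _ hε)
  have hmono : nhdsWithin (0:ℝ) (Set.Ioi 0) ≤ nhdsWithin 0 {(0:ℝ)}ᶜ :=
    nhdsWithin_mono 0 (fun t ht => ne_of_gt ht)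
  have hev2 := hev.filter_mono hmono
  have hmem := eventually_line_mem hs hy u
  have hpos : ∀ᶠ t : ℝ in nhdsWithin 0 (Set.Ioi 0), 0 < t :=
    eventually_mem_nhdsWithin
  obtain ⟨t, hts, htm, htp⟩ := (hev2.and (hmem.and hpos)).exists
  refine ⟨t, htp, htm, ?_⟩
  have hsl : slope (fun t : ℝ => g (y + t • u)) 0 t
      = (g (y + t • u) - g y) / t := by
    rw [slope_def_field]; simp [div_eq_inv_mul]
  rw [hsl] at hts
  have := (div_lt_iff₀ htp).1 hts
  linarith [this]

lemma slope_lower {k : ℕ} {g : (Fin k → ℝ) → ℝ} {G : (Fin k → ℝ) →L[ℝ] ℝ}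
    {y : Fin k → ℝ} (u : Fin k → ℝ) (hg : HasFDerivAt g G y) {φ : ℝ}
    (h : ∀ᶠ t : ℝ in nhdsWithin 0 (Set.Ioi 0), t * φ ≤ g (y + t • u) - g y) :
    φ ≤ G u := by
  have hd := line_hasDerivAt u hg
  have hslope := hasDerivAt_iff_tendsto_slope.1 hd
  have hmono : nhdsWithin (0:ℝ) (Set.Ioi 0) ≤ nhdsWithin 0 {(0:ℝ)}ᶜ :=
    nhdsWithin_mono 0 (fun t ht => ne_of_gt ht)
  have hslope2 := hslope.mono_left hmono
  have hpos : ∀ᶠ t : ℝ in nhdsWithin 0 (Set.Ioi 0), 0 < t :=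
    eventually_mem_nhdsWithin
  refine ge_of_tendsto hslope2 ?_
  filter_upwards [h, hpos] with t ht htp
  have hsl : slope (fun t : ℝ => g (y + t • u)) 0 t
      = (g (y + t • u) - g y) / t := by
    rw [slope_def_field]; simp [div_eq_inv_mul]
  rw [hsl]
  rw [le_div_iff₀ htp]
  linarith

lemma quad_min {n : ℕ} {M : Matrix (Fin n) (Fin n) ℝ} (hsymm : M.IsSymm)
    (hpsd : M.PosSemidef) {xb bb : Fin n → ℝ} (h : M *ᵥ xb = bb) (x : Fin n → ℝ) :
    (1/2 : ℝ) * (xb ⬝ᵥ M *ᵥ xb) - bb ⬝ᵥ xb ≤ (1/2 : ℝ) * (x ⬝ᵥ M *ᵥ x) - bb ⬝ᵥ x := by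
  have h0 := hpsd.dotProduct_mulVec_nonneg (x - xb)
  rw [star_trivial] at h0
  rw [Matrix.mulVec_sub] at h0
  rw [sub_dotProduct, dotProduct_sub, dotProduct_sub] at h0
  have h1 : xb ⬝ᵥ M *ᵥ x = x ⬝ᵥ M *ᵥ xb := dot_symm hsymm xb x
  have h2 : x ⬝ᵥ M *ᵥ xb = bb ⬝ᵥ x := by rw [h, dotProduct_comm]
  have h3 : xb ⬝ᵥ M *ᵥ xb = bb ⬝ᵥ xb := by rw [h, dotProduct_comm]
  rw [h1, h2] at h0
  linarith [h0, h3]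

lemma Amat_symm {n m : ℕ} {A0 : Matrix (Fin n) (Fin n) ℝ}
    {A : Fin m → Matrix (Fin n) (Fin n) ℝ} (hA0 : A0.IsSymm) (hA : ∀ i, (A i).IsSymm)
    (σ : Fin m → ℝ) : (Amat A0 A σ).IsSymm := by
  unfold Matrix.IsSymm
  unfold Amat
  rw [Matrix.transpose_add, Matrix.transpose_sum, hA0.eq]
  congr 1
  exact Finset.sum_congr rfl fun k _ => by rw [Matrix.transpose_smul, (hA k).eq]

lemma qsum {n m : ℕ} (A0 : Matrix (Fin n) (Fin n) ℝ) (A : Fin m → Matrix (Fin n) (Fin n) ℝ)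
    (b0 : Fin n → ℝ) (b : Fin m → Fin n → ℝ) (c : Fin m → ℝ) (σ : Fin m → ℝ) (x : Fin n → ℝ) :
    qf A0 b0 0 x + qvec A b c x ⬝ᵥ σ =
      (1/2 : ℝ) * (x ⬝ᵥ Amat A0 A σ *ᵥ x) - bvec b0 b σ ⬝ᵥ x + c ⬝ᵥ σ := by
  have ha : x ⬝ᵥ Amat A0 A σ *ᵥ x = x ⬝ᵥ A0 *ᵥ x + ∑ k, σ k * (x ⬝ᵥ A k *ᵥ x) := by
    have h1 : ∀ i, (Amat A0 A σ *ᵥ x) i = (A0 *ᵥ x) i + ∑ k, σ k * (A k *ᵥ x) i := by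
      intro i
      simp only [Amat, Matrix.add_mulVec, Pi.add_apply]
      congr 1
      simp only [Matrix.mulVec, dotProduct, Finset.sum_apply, Matrix.sum_apply,
        Matrix.smul_apply, smul_eq_mul, Finset.sum_mul, Finset.mul_sum]
      rw [Finset.sum_comm]
      exact Finset.sum_congr rfl fun k _ => Finset.sum_congr rfl fun j _ => by ring
    simp only [dotProduct, h1, mul_add, Finset.sum_add_distrib, Finset.mul_sum]
    congr 1
    rw [Finset.sum_comm]
    exact Finset.sum_congr rfl fun k _ => Finset.sum_congr rfl fun i _ => by ring
  have hb : bvec b0 b σ ⬝ᵥ x = b0 ⬝ᵥ x + ∑ k, σ k * (b k ⬝ᵥ x) := by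
    simp only [bvec, dotProduct, Pi.add_apply, Finset.sum_apply, Pi.smul_apply,
      smul_eq_mul, Finset.mul_sum]
    rw [show (∑ k : Fin m, ∑ i : Fin n, σ k * (b k i * x i))
        = ∑ i : Fin n, ∑ k : Fin m, σ k * (b k i * x i) from Finset.sum_comm]
    rw [← Finset.sum_add_distrib]
    refine Finset.sum_congr rfl fun i _ => ?_
    rw [add_mul, Finset.sum_mul]
    congr 1
    exact Finset.sum_congr rfl fun k _ => by ring
  have hq : qvec A b c x ⬝ᵥ σ
      = ∑ k, ((1/2 : ℝ) * (x ⬝ᵥ A k *ᵥ x) - b k ⬝ᵥ x + c k) * σ k := rfl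
  have hcσ : c ⬝ᵥ σ = ∑ k, c k * σ k := rfl
  have hsplit : ∑ k, ((1/2 : ℝ) * (x ⬝ᵥ A k *ᵥ x) - b k ⬝ᵥ x + c k) * σ k
      = ∑ k, ((1/2 : ℝ) * (σ k * (x ⬝ᵥ A k *ᵥ x))) - ∑ k, (σ k * (b k ⬝ᵥ x))
        + ∑ k, (c k * σ k) := by
    rw [← Finset.sum_sub_distrib, ← Finset.sum_add_distrib]
    exact Finset.sum_congr rfl fun k _ => by ring
  rw [ha, hb, hq, hcσ, hsplit]
  simp only [qf]
  rw [mul_add, Finset.mul_sum]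
  ring

lemma conj_le {m : ℕ} {V Vs : (Fin m → ℝ) → ℝ} {dV dVs : Set (Fin m → ℝ)}
    (hconj : isConjugate V dV Vs dVs) {σ : Fin m → ℝ} (hσ : σ ∈ dVs) {y : Fin m → ℝ}
    (hy : y ∈ dV) : y ⬝ᵥ σ - V y ≤ Vs σ := by
  rw [hconj.2 σ hσ]
  refine le_csSup ?_ ⟨y, hy, rfl⟩
  have := hσ
  rw [hconj.1] at this
  exact this

lemma conj_attain {m : ℕ} {V Vs : (Fin m → ℝ) → ℝ} {dV dVs : Set (Fin m → ℝ)}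
    {y : Fin m → ℝ} (hV : properLscConvex V dV) (hconj : isConjugate V dV Vs dVs)
    {σb : Fin m → ℝ} (hσint : σb ∈ interior dVs)
    (hVs' : HasFDerivAt Vs (dotCLM y) σb) :
    y ∈ dV ∧ V y ≤ y ⬝ᵥ σb - Vs σb := by
  have hσdVs : σb ∈ dVs := interior_subset hσint
  have hne : ((fun y => y ⬝ᵥ σb - V y) '' dV).Nonempty := hV.1.image _
  have hs : Vs σb = sSup ((fun y => y ⬝ᵥ σb - V y) '' dV) := hconj.2 σb hσdVs
  have hseq : ∀ k : ℕ, ∃ zz, zz ∈ dV ∧ Vs σb - 1/((k:ℝ)+1) < zz ⬝ᵥ σb - V zz := by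
    intro k
    have hpos : (0:ℝ) < 1/((k:ℝ)+1) := by positivity
    have hlt : Vs σb - 1/((k:ℝ)+1) < sSup ((fun y => y ⬝ᵥ σb - V y) '' dV) := by
      rw [← hs]; linarith
    obtain ⟨a, ⟨zz, hzz, rfl⟩, hlt'⟩ := exists_lt_of_lt_csSup hne hlt
    exact ⟨zz, hzz, hlt'⟩
  choose z hz hzlt using hseq
  have hbound : ∀ u : Fin m → ℝ, ∀ ε : ℝ, 0 < ε →
      ∀ᶠ k : ℕ in Filter.atTop, z k ⬝ᵥ u ≤ y ⬝ᵥ u + ε := by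
    intro u ε hε
    obtain ⟨t, htp, htm, hts⟩ := slope_upper u hVs' (half_pos hε) isOpen_interior hσint
    rw [dotCLM_apply] at hts
    have hklim : ∀ᶠ k : ℕ in Filter.atTop, 1/((k:ℝ)+1) < t * (ε/2) :=
      tendsto_one_div_add_atTop_nhds_zero_nat.eventually_lt_const (by positivity)
    filter_upwards [hklim] with k hk
    have h1 : z k ⬝ᵥ (σb + t • u) - V (z k) ≤ Vs (σb + t • u) :=
      conj_le hconj (interior_subset htm) (hz k)
    have h2 := hzlt k
    have hdot : z k ⬝ᵥ (σb + t • u) = z k ⬝ᵥ σb + t * (z k ⬝ᵥ u) := by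
      rw [dotProduct_add, dotProduct_smul]; simp
    rw [hdot] at h1
    have hmul : t * (z k ⬝ᵥ u) ≤ t * (y ⬝ᵥ u + ε) := by nlinarith
    exact le_of_mul_le_mul_left hmul htp
  have htendi : ∀ i, Filter.Tendsto (fun k => z k i) Filter.atTop (nhds (y i)) := by
    intro i
    rw [Metric.tendsto_atTop]
    intro ε hε
    have h1 := hbound (Pi.single i 1) (ε/2) (half_pos hε)
    have h2 := hbound (-(Pi.single i 1)) (ε/2) (half_pos hε)
    obtain ⟨N, hN⟩ := Filter.eventually_atTop.1 (h1.and h2)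
    refine ⟨N, fun k hk => ?_⟩
    obtain ⟨ha, hb⟩ := hN k hk
    simp only [dotProduct_neg, dotProduct_single, mul_one] at ha hb
    rw [Real.dist_eq, abs_sub_lt_iff]
    constructor <;> linarith
  have htend : Filter.Tendsto z Filter.atTop (nhds y) := tendsto_pi_nhds.2 htendi
  have hC := hV.2.2
  have hmemC : ∀ k : ℕ, (z k, z k ⬝ᵥ σb - Vs σb + 1/((k:ℝ)+1)) ∈
      {p : (Fin m → ℝ) × ℝ | p.1 ∈ dV ∧ V p.1 ≤ p.2} := by
    intro k
    refine ⟨hz k, ?_⟩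
    have := hzlt k
    simp only [Set.mem_setOf_eq]
    linarith
  have hdott : Filter.Tendsto (fun k => z k ⬝ᵥ σb) Filter.atTop (nhds (y ⬝ᵥ σb)) := by
    simp only [dotProduct]
    exact tendsto_finset_sum _ fun i _ => (htendi i).mul tendsto_const_nhds
  have htend2 : Filter.Tendsto (fun k : ℕ => (z k, z k ⬝ᵥ σb - Vs σb + 1/((k:ℝ)+1)))
      Filter.atTop (nhds (y, y ⬝ᵥ σb - Vs σb)) := by
    refine Filter.Tendsto.prodMk_nhds htend ?_
    have h3 := (hdott.sub (tendsto_const_nhds (x := Vs σb))).add tendsto_one_div_add_atTop_nhds_zero_nat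
    simpa using h3
  have hfinal := hC.mem_of_tendsto htend2 (Filter.Eventually.of_forall hmemC)
  exact ⟨hfinal.1, hfinal.2⟩

lemma subdiff_grad_eq {m : ℕ} {V : (Fin m → ℝ) → ℝ} {dV : Set (Fin m → ℝ)}
    {y σb g : Fin m → ℝ} (hsub : σb ∈ subdiff V dV y) (hyint : y ∈ interior dV)
    (hVd : HasFDerivAt V (dotCLM g) y) : g = σb := by
  have key : ∀ u : Fin m → ℝ, u ⬝ᵥ σb ≤ g ⬝ᵥ u := by
    intro u
    have hev : ∀ᶠ t : ℝ in nhdsWithin 0 (Set.Ioi 0),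
        t * (u ⬝ᵥ σb) ≤ V (y + t • u) - V y := by
      filter_upwards [eventually_line_mem isOpen_interior hyint u] with t htm
      have h1 := hsub.2 (y + t • u) (interior_subset htm)
      have h2 : (y + t • u - y) ⬝ᵥ σb = t * (u ⬝ᵥ σb) := by
        rw [add_sub_cancel_left, smul_dotProduct]; simp
      linarith [h2 ▸ h1]
    have := slope_lower u hVd hev
    rwa [dotCLM_apply] at this
  funext i
  have h1 := key (Pi.single i 1)
  have h2 := key (-(Pi.single i 1))
  simp only [single_dotProduct, dotProduct_single, neg_dotProduct,
    dotProduct_neg, one_mul, mul_one] at h1 h2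
  linarith

end Aux

/-- Let `σ̄ ∈ S₀ ∩ int(dom V*)` be a critical point of `D` and
`x̄ := A(σ̄)⁻¹ b(σ̄)`. Then `(x̄,σ̄)` is a critical point of `Ξ`; consequently `x̄ ∈ X₀`,
`x̄` is a critical point of `f`, `f(x̄) = Ξ(x̄,σ̄) = D(σ̄)`, and if moreover `A(σ̄) ⪰ 0`
then `f(x̄) = inf_{dom f} f = sup_{S_col⁺} D = D(σ̄)`. -/
theorem statement6 {n m : ℕ}
    (A0 : Matrix (Fin n) (Fin n) ℝ) (A : Fin m → Matrix (Fin n) (Fin n) ℝ)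
    (b0 : Fin n → ℝ) (b : Fin m → Fin n → ℝ) (c : Fin m → ℝ)
    (hA0 : A0.IsSymm) (hA : ∀ i, (A i).IsSymm)
    (V Vs : (Fin m → ℝ) → ℝ) (dV dVs : Set (Fin m → ℝ))
    (gV gVs : (Fin m → ℝ) → (Fin m → ℝ))
    (hV : properLscConvex V dV) (hLeg : LegendreType V dV gV)
    (hconj : isConjugate V dV Vs dVs)
    (hgVs : ∀ σ ∈ interior dVs, HasFDerivAt Vs (dotCLM (gVs σ)) σ)
    (D : (Fin m → ℝ) → ℝ)
    (hD : ∀ σ ∈ dVs, bvec b0 b σ ∈ Set.range (Amat A0 A σ).mulVec →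
      ∀ x, Amat A0 A σ *ᵥ x = bvec b0 b σ →
        D σ = qf A0 b0 0 x + qvec A b c x ⬝ᵥ σ - Vs σ)
    (σb : Fin m → ℝ) (hσint : σb ∈ interior dVs)
    (hS0 : IsUnit (Amat A0 A σb).det)
    (hDcrit : HasFDerivAt D (0 : (Fin m → ℝ) →L[ℝ] ℝ) σb)
    (xb : Fin n → ℝ) (hxb : xb = (Amat A0 A σb)⁻¹ *ᵥ bvec b0 b σb) :
    Amat A0 A σb *ᵥ xb = bvec b0 b σb ∧
    qvec A b c xb = gVs σb ∧
    qvec A b c xb ∈ interior dV ∧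
    HasFDerivAt (fun x => qf A0 b0 0 x + V (qvec A b c x))
      (0 : (Fin n → ℝ) →L[ℝ] ℝ) xb ∧
    qf A0 b0 0 xb + V (qvec A b c xb) =
      qf A0 b0 0 xb + qvec A b c xb ⬝ᵥ σb - Vs σb ∧
    qf A0 b0 0 xb + qvec A b c xb ⬝ᵥ σb - Vs σb = D σb ∧
    ((Amat A0 A σb).PosSemidef →
      (∀ x, qvec A b c x ∈ dV →
        qf A0 b0 0 xb + V (qvec A b c xb) ≤ qf A0 b0 0 x + V (qvec A b c x)) ∧
      (∀ σ, σ ∈ dVs → bvec b0 b σ ∈ Set.range (Amat A0 A σ).mulVec →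
        (Amat A0 A σ).PosSemidef → D σ ≤ D σb)) := by
  have h0 : Amat A0 A σb *ᵥ xb = bvec b0 b σb := by rw [hxb]; exact mulVec_inv_eq hS0 _
  have hq : qvec A b c xb = gVs σb := qvec_eq_gVs hA0 hA hgVs hD hσint hS0 hDcrit hxb
  have hVs' : HasFDerivAt Vs (dotCLM (qvec A b c xb)) σb := by
    rw [hq]; exact hgVs σb hσint
  have hat := conj_attain hV hconj hσint hVs'
  have hydV : qvec A b c xb ∈ dV := hat.1
  have hle := conj_le hconj (interior_subset hσint) hydV
  have hfen : V (qvec A b c xb) = qvec A b c xb ⬝ᵥ σb - Vs σb := by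
    linarith [hat.2]
  have hsub : σb ∈ subdiff V dV (qvec A b c xb) := by
    refine ⟨hydV, fun y' hy' => ?_⟩
    have h1 := conj_le hconj (interior_subset hσint) hy'
    rw [sub_dotProduct]
    linarith
  have hint : qvec A b c xb ∈ interior dV := by
    by_contra hw
    have hemp := hLeg.2.2.1 _ hw
    rw [hemp] at hsub
    exact hsub
  have hgVeq : gV (qvec A b c xb) = σb :=
    subdiff_grad_eq hsub hint (hLeg.2.1 _ hint)
  have hVd : HasFDerivAt V (dotCLM σb) (qvec A b c xb) := by
    rw [← hgVeq]; exact hLeg.2.1 _ hint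
  have hcrit := hasFDerivAt_primal_crit hA0 hA h0 hVd
  have hDval : D σb = qf A0 b0 0 xb + qvec A b c xb ⬝ᵥ σb - Vs σb :=
    hD σb (interior_subset hσint) ⟨xb, h0⟩ xb h0
  refine ⟨h0, hq, hint, hcrit, by linarith, hDval.symm, ?_⟩
  intro hpsd
  have hsymm := Amat_symm hA0 hA σb
  constructor
  · intro x hx
    have h1 := conj_le hconj (interior_subset hσint) hx
    have h2 := quad_min hsymm hpsd h0 x
    have e1 := qsum A0 A b0 b c σb x
    have e2 := qsum A0 A b0 b c σb xb
    linarith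
  · intro σ hσ hrange hpsdσ
    obtain ⟨x', hx'⟩ := hrange
    have hDσ := hD σ hσ ⟨x', hx'⟩ x' hx'
    have hsymmσ := Amat_symm hA0 hA σ
    have h2 := quad_min hsymmσ hpsdσ hx' xb
    have e1 := qsum A0 A b0 b c σ x'
    have e2 := qsum A0 A b0 b c σ xb
    have h3 := conj_le hconj hσ hydV
    rw [hDval]
    linarith
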